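/- For every (z₁, z₂) ∈ ℂ² with (z₁, z₂) ≠ (0, 0), there exists a unique real number φ such that |z₁|² · |a|^(−2φ) + |z₂|² · |b|^(−2φ) = 1. -/

import Mathlib

lemma aux_strictAnti {A c : ℝ} (hA : 1 < A) (hc : 0 < c) :
    StrictAnti (fun φ : ℝ => c * A ^ (-(2 * φ))) := by
  intro x y hxy
  exact mul_lt_mul_of_pos_left
    ((Real.rpow_lt_rpow_left_iff hA).2 (by linarith)) hc

lemma aux_anti {A c : ℝ} (hA : 1 < A) (hc : 0 ≤ c) :
    Antitone (fun φ : ℝ => c * A ^ (-(2 * φ))) := by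
  intro x y hxy
  exact mul_le_mul_of_nonneg_left
    ((Real.rpow_le_rpow_left_iff hA).2 (by linarith)) hc

/-- For every `(z₁, z₂) ≠ (0,0)` in `ℂ²` there is a unique real `φ` with
`|z₁|² |a|^(-2φ) + |z₂|² |b|^(-2φ) = 1`. -/
theorem stmt4 (a b : ℂ) (ha : 1 < ‖a‖) (hb : 1 < ‖b‖)
    (z : ℂ × ℂ) (hz : z ≠ 0) :
    ∃! φ : ℝ,
      ‖z.1‖ ^ 2 * ‖a‖ ^ (-(2 * φ)) +
        ‖z.2‖ ^ 2 * ‖b‖ ^ (-(2 * φ)) = 1 := by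
  set A := ‖a‖ with hAdef
  set B := ‖b‖ with hBdef
  set c1 := ‖z.1‖ ^ 2 with hc1def
  set c2 := ‖z.2‖ ^ 2 with hc2def
  have hA0 : 0 < A := lt_trans one_pos ha
  have hB0 : 0 < B := lt_trans one_pos hb
  have hc1 : 0 ≤ c1 := sq_nonneg _
  have hc2 : 0 ≤ c2 := sq_nonneg _
  set f : ℝ → ℝ := fun φ => c1 * A ^ (-(2 * φ)) + c2 * B ^ (-(2 * φ)) with hfdef
  have hpos : 0 < c1 ∨ 0 < c2 := by
    rcases eq_or_ne z.1 0 with h1 | h1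
    · right
      have h2 : z.2 ≠ 0 := by
        intro h2; exact hz (Prod.ext h1 h2)
      exact pow_pos (norm_pos_iff.mpr h2) 2
    · left; exact pow_pos (norm_pos_iff.mpr h1) 2
  -- strict antitonicity
  have hanti : StrictAnti f := by
    rcases hpos with h | h
    · exact (aux_strictAnti ha h).add_antitone (aux_anti hb hc2)
    · exact (aux_anti ha hc1).add_strictAnti (aux_strictAnti hb h)
  -- continuity
  have hfeq : f = fun φ => c1 * Real.exp (Real.log A * (-(2 * φ))) +
      c2 * Real.exp (Real.log B * (-(2 * φ))) := by
    funext φ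
    rw [hfdef]
    simp only [Real.rpow_def_of_pos hA0, Real.rpow_def_of_pos hB0]
  have hcont : Continuous f := by
    rw [hfeq]; fun_prop
  -- tendsto 0 at top
  have htop : Filter.Tendsto f Filter.atTop (nhds 0) := by
    rw [hfeq]
    have h0 : (0 : ℝ) = c1 * 0 + c2 * 0 := by ring
    rw [h0]
    have lim : ∀ C : ℝ, 1 < C → Filter.Tendsto
        (fun φ : ℝ => Real.exp (Real.log C * (-(2 * φ)))) Filter.atTop (nhds 0) := by
      intro C hC
      apply Real.tendsto_exp_atBot.comp
      have hlog : 0 < Real.log C := Real.log_pos hC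
      apply Filter.Tendsto.const_mul_atBot hlog
      apply Filter.tendsto_neg_atBot_iff.2
      exact (Filter.tendsto_const_mul_atTop_of_pos two_pos).2 Filter.tendsto_id
    exact (((lim A ha).const_mul c1).add ((lim B hb).const_mul c2))
  -- f takes a value > 1 somewhere
  have hbot : ∃ y, 1 < f y := by
    have key : ∀ (C c : ℝ), 1 < C → 0 < c →
        Filter.Tendsto (fun φ : ℝ => c * C ^ (-(2 * φ))) Filter.atBot Filter.atTop := by
      intro C c hC hc
      apply Filter.Tendsto.const_mul_atTop hc
      have hcomp : Filter.Tendsto (fun φ : ℝ => Real.log C * (-(2 * φ)))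
          Filter.atBot Filter.atTop := by
        apply Filter.Tendsto.const_mul_atTop (Real.log_pos hC)
        apply Filter.tendsto_neg_atBot_atTop.comp
        exact (Filter.tendsto_const_mul_atBot_of_pos two_pos).2 Filter.tendsto_id
      have := Real.tendsto_exp_atTop.comp hcomp
      refine this.congr (fun φ => ?_)
      simp [Real.rpow_def_of_pos (lt_trans one_pos hC)]
    have hge : Filter.Tendsto f Filter.atBot Filter.atTop := by
      rcases hpos with h | h
      · apply Filter.tendsto_atTop_mono (fun φ => ?_) (key A c1 ha h)
        have : 0 ≤ c2 * B ^ (-(2 * φ)) :=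
          mul_nonneg hc2 (Real.rpow_nonneg hB0.le _)
        simp only [hfdef]; linarith
      · apply Filter.tendsto_atTop_mono (fun φ => ?_) (key B c2 hb h)
        have : 0 ≤ c1 * A ^ (-(2 * φ)) :=
          mul_nonneg hc1 (Real.rpow_nonneg hA0.le _)
        simp only [hfdef]; linarith
    exact (hge.eventually_gt_atTop 1).exists
  have hlt : ∃ x, f x < 1 := by
    exact (htop.eventually_lt_const one_pos).exists
  obtain ⟨x, hx⟩ := hlt
  obtain ⟨y, hy⟩ := hbot
  have h1mem : (1 : ℝ) ∈ Set.uIcc (f x) (f y) :=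
    Set.mem_uIcc.2 (Or.inl ⟨hx.le, hy.le⟩)
  obtain ⟨φ, _, hφ⟩ := intermediate_value_uIcc (hcont.continuousOn (s := Set.uIcc x y)) h1mem
  refine ⟨φ, hφ, fun ψ hψ => hanti.injective ?_⟩
  show f ψ = f φ
  rw [hφ]; exact hψ
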